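/- Let L be a field of characteristic p > 0 that is perfect and finitely generated as a field extension of 𝔽_p. Then L is a finite field. -/

import Mathlib

open IntermediateField Module

/-- If `L` is a perfect field of char `p` and `A` is an intermediate field of
`L / 𝔽_p` with `L / A` finite, then every element of `A` has a `p`-th root in `A`. -/
lemma aux_perfect_of_findim (p : ℕ) [Fact p.Prime] (L : Type*) [Field L]
    [Algebra (ZMod p) L] [CharP L p] [ExpChar L p] [PerfectRing L p]
    (A : IntermediateField (ZMod p) L) [FiniteDimensional A L] :
    ∀ a ∈ A, ∃ b ∈ A, b ^ p = a := by
  have hp : p.Prime := Fact.out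
  -- The inverse of Frobenius, as an algebra equivalence over `ZMod p`.
  have hcomm : ∀ c : ZMod p,
      (frobeniusEquiv L p).symm (algebraMap (ZMod p) L c) = algebraMap (ZMod p) L c := by
    intro c
    have h : frobenius L p (algebraMap (ZMod p) L c) = algebraMap (ZMod p) L c := by
      rw [frobenius_def, ← map_pow, ZMod.pow_card]
    nth_rewrite 1 [← h]
    exact frobeniusEquiv_symm_apply_frobenius L p _
  let φ : L ≃ₐ[ZMod p] L :=
    { (frobeniusEquiv L p).symm with commutes' := hcomm }
  have hφ : ∀ x : L, φ x = (frobeniusEquiv L p).symm x := fun _ => rfl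
  set A' : IntermediateField (ZMod p) L := A.map (φ : L →ₐ[ZMod p] L) with hA'
  have hle : A ≤ A' := by
    intro x hx
    refine ⟨x ^ p, pow_mem hx p, ?_⟩
    show φ (x ^ p) = x
    rw [hφ, ← frobenius_def, frobeniusEquiv_symm_apply_frobenius]
  have hmaptop : (⊤ : IntermediateField (ZMod p) L).map (φ : L →ₐ[ZMod p] L) = ⊤ := by
    rw [eq_top_iff]
    intro x _
    exact ⟨φ.symm x, trivial, φ.apply_symm_apply x⟩
  have hrk : finrank A' L = finrank A L := by
    have := IntermediateField.relfinrank_map_map A ⊤ (φ : L →ₐ[ZMod p] L)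
    rwa [hmaptop, relfinrank_top_right, relfinrank_top_right, ← hA'] at this
  have hmul := IntermediateField.relfinrank_mul_finrank_top hle
  rw [hrk] at hmul
  have hpos : 0 < finrank A L := finrank_pos
  have hone : A.relfinrank A' = 1 := by
    have := Nat.eq_of_mul_eq_mul_right hpos (hmul.trans (one_mul (finrank A L)).symm)
    exact this
  rw [relfinrank_eq_finrank_of_le hle, IntermediateField.finrank_eq_one_iff] at hone
  have hle' : A' ≤ A := by
    intro x hx
    have hmem : x ∈ (⊥ : IntermediateField A L) := by
      rw [← hone]
      exact hx
    obtain ⟨a, ha⟩ := IntermediateField.mem_bot.mp hmem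
    have hax : (a : L) = x := ha
    rw [← hax]; exact a.2
  intro a ha
  refine ⟨φ a, hle' ⟨a, ha, rfl⟩, ?_⟩
  rw [hφ]
  exact frobeniusEquiv_symm_pow_p L p a

/-- A finitely generated algebraic field extension is finite dimensional. -/
lemma aux_fd {F L : Type*} [Field F] [Field L] [Algebra F L] [Algebra.IsAlgebraic F L]
    (s : Finset L) (h : IntermediateField.adjoin F (s : Set L) = ⊤) :
    FiniteDimensional F L := by
  haveI : FiniteDimensional F (IntermediateField.adjoin F (s : Set L)) :=
    IntermediateField.finiteDimensional_adjoin fun x _ => Algebra.IsIntegral.isIntegral x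
  rw [h] at this
  exact (IntermediateField.topEquiv (F := F) (E := L)).toLinearEquiv.finiteDimensional

set_option synthInstance.maxHeartbeats 1000000 in
set_option maxHeartbeats 1000000 in
/-- A perfect field of characteristic `p` that is finitely generated as a field
extension of `𝔽_p` is finite. -/
theorem finite_of_perfect_and_fg (p : ℕ) [Fact p.Prime]
    (L : Type*) [Field L] [Algebra (ZMod p) L] [CharP L p] [ExpChar L p]
    [PerfectRing L p]
    (hfg : ∃ s : Finset L, IntermediateField.adjoin (ZMod p) (s : Set L) = ⊤) :
    Finite L := by
  have hp : p.Prime := Fact.out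
  obtain ⟨u, hu⟩ := hfg
  have halg : Algebra.IsAlgebraic (ZMod p) L := by
    obtain ⟨s, hB⟩ := exists_isTranscendenceBasis (ZMod p)
      L
    rcases isEmpty_or_nonempty s with h | hne
    · exact hB.isEmpty_iff_isAlgebraic.mp h
    obtain ⟨i⟩ := hne
    exfalso
    set A : IntermediateField (ZMod p) L :=
      IntermediateField.adjoin (ZMod p) (Set.range (Subtype.val : s → L)) with hA
    haveI : Algebra.IsAlgebraic A L := hB.isAlgebraic_field
    -- `L` is finite dimensional over `A`
    have hAu : IntermediateField.adjoin A (u : Set L) = ⊤ := by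
      have h1 : IntermediateField.adjoin (ZMod p) (u : Set L) ≤
          (IntermediateField.adjoin A (u : Set L)).restrictScalars (ZMod p) :=
        IntermediateField.adjoin_le_iff.mpr (IntermediateField.subset_adjoin _ _)
      rw [hu, top_le_iff] at h1
      rw [eq_top_iff]
      intro x _
      have : x ∈ (IntermediateField.adjoin A (u : Set L)).restrictScalars (ZMod p) := by
        rw [h1]; trivial
      exact this
    haveI : FiniteDimensional A L := aux_fd u hAu
    -- `A` is perfect
    have hperf := aux_perfect_of_findim p L A
    -- the basis element `t` has a `p`-th root in `A`
    have htA : (i : L) ∈ A := IntermediateField.subset_adjoin _ _ ⟨i, rfl⟩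
    obtain ⟨b, hbA, hbp⟩ := hperf (i : L) htA
    -- transfer to the rational function field
    have ind := hB.1
    let e := ind.aevalEquivField
    have hbA' : b ∈ A := hbA
    set y : FractionRing (MvPolynomial s (ZMod p)) := e.symm ⟨b, hbA'⟩ with hy
    have hXt : e (algebraMap (MvPolynomial s (ZMod p)) _ (MvPolynomial.X i)) =
        (⟨(i : L), htA⟩ : A) := by
      apply Subtype.ext
      rw [ind.aevalEquivField_algebraMap_apply_coe]
      simp
    have hyp : y ^ p = algebraMap (MvPolynomial s (ZMod p)) _ (MvPolynomial.X i) := by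
      apply e.injective
      rw [map_pow, hy, AlgEquiv.apply_symm_apply, hXt]
      apply Subtype.ext
      exact hbp
    -- `y` is integral over the polynomial ring, hence a polynomial
    have hyint : IsIntegral (MvPolynomial s (ZMod p)) y := by
      refine ⟨Polynomial.X ^ p - Polynomial.C (MvPolynomial.X i),
        Polynomial.monic_X_pow_sub_C _ hp.ne_zero, ?_⟩
      rw [Polynomial.eval₂_sub, Polynomial.eval₂_pow, Polynomial.eval₂_X, Polynomial.eval₂_C,
        hyp, sub_self]
    obtain ⟨z, hz⟩ := IsIntegrallyClosed.isIntegral_iff.mp hyint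
    have hzp : z ^ p = MvPolynomial.X i := by
      apply IsFractionRing.injective (MvPolynomial s (ZMod p))
        (FractionRing (MvPolynomial s (ZMod p)))
      rw [map_pow, hz, hyp]
    -- specialize to one variable
    haveI : DecidableEq ↑s := Classical.decEq _
    set q : Polynomial (ZMod p) :=
      MvPolynomial.aeval (fun j : s => if j = i then (Polynomial.X : Polynomial (ZMod p)) else 0) z
      with hq
    have hqp : q ^ p = Polynomial.X := by
      rw [hq, ← map_pow, hzp, MvPolynomial.aeval_X, if_pos rfl]
    have hqu : IsUnit q := by
      have h1 : (Polynomial.X : Polynomial (ZMod p)) = q * q ^ (p - 1) := by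
        rw [← pow_succ', Nat.sub_add_cancel hp.one_le, hqp]
      rcases Polynomial.irreducible_X.isUnit_or_isUnit h1 with h | h
      · exact h
      · exact (isUnit_pow_iff (Nat.sub_ne_zero_of_lt hp.one_lt)).mp h
    exact Polynomial.not_isUnit_X (hqp ▸ hqu.pow p)
  haveI : FiniteDimensional (ZMod p) L := aux_fd u hu
  exact Module.finite_of_finite (ZMod p)
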